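/- Let H be a real Hilbert space, let ψ : H → ℝ be convex and differentiable with gradient ∇ψ : H → H (so that ψ has Fréchet derivative at every x represented by ∇ψ(x) via the inner product), and let v ∈ H satisfy ψ(v) = 0 and ψ(w) ≥ 0 for all w ∈ H. Let T > 0, let h : [0, T] → H be continuous, and let u : [0, T] → H be continuously differentiable with u'(t) + ∇ψ(u(t)) = h(t) for all t ∈ [0, T]. Then ∫_0^T ( ψ(u(t)) + ⟨h(t), v − u(t)⟩ ) dt ≤ (1/2) ‖v − u(0)‖² − (1/2) ‖v − u(T)‖². -/

import Mathlib

open MeasureTheory Metric Set Real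

/-- Gradient inequality for convex functions. -/
lemma convex_gradient_ineq {H : Type*} [NormedAddCommGroup H] [InnerProductSpace ℝ H]
    [CompleteSpace H] {ψ : H → ℝ} {g : H} (hconv : ConvexOn ℝ Set.univ ψ)
    (x y : H) (hg : HasGradientAt ψ g x) :
    ψ x + @inner ℝ _ _ g (y - x) ≤ ψ y := by
  rcases eq_or_ne x y with rfl | hne
  · simp
  · set φ : ℝ → ℝ := fun s => ψ (x + s • (y - x)) with hφ
    have hline : ∀ s : ℝ, HasDerivAt (fun s : ℝ => x + s • (y - x)) (y - x) s := by
      intro s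
      simpa using ((hasDerivAt_id s).smul_const (y - x)).const_add x
    have hφconv : ConvexOn ℝ Set.univ φ := by
      have := hconv.comp_affineMap (AffineMap.lineMap x y : ℝ →ᵃ[ℝ] H)
      simp only [Set.preimage_univ] at this
      have hfun : φ = ψ ∘ (AffineMap.lineMap x y : ℝ →ᵃ[ℝ] H) := by
        funext s
        simp [hφ, Function.comp, AffineMap.lineMap_apply]
        rw [add_comm]
      rw [hfun]; exact this
    have hφd : HasDerivAt φ (@inner ℝ _ _ g (y - x)) 0 := by
      have hx : HasFDerivAt ψ ((InnerProductSpace.toDual ℝ H) g) (x + (0:ℝ) • (y - x)) := by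
        simpa using hg.hasFDerivAt
      have := hx.comp_hasDerivAt 0 (hline 0)
      exact this
    have hsl := hφconv.le_slope_of_hasDerivAt (Set.mem_univ (0:ℝ)) (Set.mem_univ (1:ℝ))
      one_pos hφd
    have : @inner ℝ _ _ g (y - x) ≤ ψ y - ψ x := by
      simpa [slope, hφ] using hsl
    linarith

/-- **Energy estimate (esta11) for a gradient flow:** if `ψ` is convex, differentiable with
gradient `∇ψ`, nonnegative and vanishing at `v`, and `u` is a `C¹` solution of
`u' + ∇ψ(u) = h` on `[0,T]`, then
`∫_0^T (ψ(u(t)) + ⟪h(t), v - u(t)⟫) dt ≤ ½‖v - u(0)‖² - ½‖v - u(T)‖²`. -/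
theorem gradient_flow_energy_estimate
    {H : Type*} [NormedAddCommGroup H] [InnerProductSpace ℝ H] [CompleteSpace H]
    (ψ : H → ℝ) (ψ' : H → H)
    (hconv : ConvexOn ℝ Set.univ ψ)
    (hgrad : ∀ x : H, HasGradientAt ψ (ψ' x) x)
    (v : H) (hv : ψ v = 0) (hmin : ∀ w : H, 0 ≤ ψ w)
    (T : ℝ) (hT : 0 < T)
    (h : ℝ → H) (hh : ContinuousOn h (Icc 0 T))
    (u u' : ℝ → H)
    (hu : ∀ t ∈ Icc (0 : ℝ) T, HasDerivAt u (u' t) t)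
    (hu' : ContinuousOn u' (Icc 0 T))
    (heq : ∀ t ∈ Icc (0 : ℝ) T, u' t + ψ' (u t) = h t) :
    (∫ t in (0 : ℝ)..T, (ψ (u t) + @inner ℝ _ _ (h t) (v - u t))) ≤
      (1 / 2) * ‖v - u 0‖ ^ 2 - (1 / 2) * ‖v - u T‖ ^ 2 := by
  have hicc : Set.uIcc (0:ℝ) T = Icc 0 T := Set.uIcc_of_le hT.le
  -- continuity facts
  have hucont : ContinuousOn u (Icc 0 T) := fun t ht => (hu t ht).continuousAt.continuousWithinAt
  have hψcont : Continuous ψ := by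
    rw [continuous_iff_continuousAt]
    exact fun x => (hgrad x).hasFDerivAt.differentiableAt.continuousAt
  -- energy function g and its derivative
  set g : ℝ → ℝ := fun t => (1/2) * @inner ℝ _ _ (v - u t) (v - u t) with hg
  have hgderiv : ∀ t ∈ Icc (0:ℝ) T,
      HasDerivAt g (-(@inner ℝ _ _ (u' t) (v - u t))) t := by
    intro t ht
    have h1 : HasDerivAt (fun s => v - u s) (-(u' t)) t := by
      simpa using (hu t ht).const_sub v
    have h2 := (h1.inner ℝ h1).const_mul (1/2 : ℝ)
    refine HasDerivAt.congr_deriv h2 (Eq.symm ?_)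
    simp only [inner_neg_left, inner_neg_right]
    rw [real_inner_comm (v - u t) (u' t)]
    ring
  -- integral of the derivative term
  have hint1 : IntervalIntegrable (fun t => -(@inner ℝ _ _ (u' t) (v - u t))) volume 0 T := by
    apply ContinuousOn.intervalIntegrable
    rw [hicc]
    exact ((hu'.inner (continuousOn_const.sub hucont)).neg)
  have hkey : (∫ t in (0:ℝ)..T, -(@inner ℝ _ _ (u' t) (v - u t)))
      = g T - g 0 := by
    apply intervalIntegral.integral_eq_sub_of_hasDerivAt
    · intro t ht; exact hgderiv t (hicc ▸ ht)
    · exact hint1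
  -- integrability of the LHS integrand
  have hint2 : IntervalIntegrable (fun t => ψ (u t) + @inner ℝ _ _ (h t) (v - u t))
      volume 0 T := by
    apply ContinuousOn.intervalIntegrable
    rw [hicc]
    exact (hψcont.comp_continuousOn hucont).add (hh.inner (continuousOn_const.sub hucont))
  -- pointwise inequality
  have hpt : ∀ t ∈ Icc (0:ℝ) T,
      ψ (u t) + @inner ℝ _ _ (h t) (v - u t) ≤ @inner ℝ _ _ (u' t) (v - u t) := by
    intro t ht
    have hgi := convex_gradient_ineq hconv (u t) v (hgrad (u t))
    have hht := heq t ht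
    have : @inner ℝ _ _ (h t) (v - u t)
        = @inner ℝ _ _ (u' t) (v - u t) + @inner ℝ _ _ (ψ' (u t)) (v - u t) := by
      rw [← hht, inner_add_left]
    rw [this]
    rw [hv] at hgi
    linarith
  -- compare integrals
  have hint3 : IntervalIntegrable (fun t => @inner ℝ _ _ (u' t) (v - u t)) volume 0 T := by
    apply ContinuousOn.intervalIntegrable
    rw [hicc]
    exact hu'.inner (continuousOn_const.sub hucont)
  have hmono := intervalIntegral.integral_mono_on hT.le hint2 hint3 hpt
  have heq2 : (∫ t in (0:ℝ)..T, @inner ℝ _ _ (u' t) (v - u t)) = g 0 - g T := by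
    have := hkey
    rw [intervalIntegral.integral_neg] at this
    linarith
  have hgval : ∀ t, g t = (1/2) * ‖v - u t‖ ^ 2 := by
    intro t
    rw [hg]
    simp [real_inner_self_eq_norm_sq]
  calc (∫ t in (0:ℝ)..T, (ψ (u t) + @inner ℝ _ _ (h t) (v - u t)))
      ≤ ∫ t in (0:ℝ)..T, @inner ℝ _ _ (u' t) (v - u t) := hmono
    _ = g 0 - g T := heq2
    _ = (1 / 2) * ‖v - u 0‖ ^ 2 - (1 / 2) * ‖v - u T‖ ^ 2 := by rw [hgval, hgval]
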